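/- Proposition 2.9 (abstract approximation of compositions of a fixed number of functions with polynomially growing Lipschitz constants): Let c, k ∈ ℕ and p ∈ [1,∞]. For every d ∈ ℕ let 𝔡_1^d, 𝔡_2^d, …, 𝔡_{k+1}^d ∈ {1,…,d^c}; for every d ∈ ℕ and i ∈ {1,…,k} let Q_i^d ⊆ ℝ^{𝔡_i^d} be a 𝔡_i^d-dimensional hypercube and let g_i^d ∈ C(Q_i^d, ℝ^{𝔡_{i+1}^d}). Assume for all d ∈ ℕ, i ∈ {1,…,k}, ε ∈ (0,1] that Cost_p(g_i^d, c·d^c, ε) ≤ c·d^c·ε^{−c}, and assume for all d ∈ ℕ and i ∈ {1,…,k−1} that g_i^d(Q_i^d) ⊆ Q_{i+1}^d. For every d ∈ ℕ let F_d = g_k^d ∘ g_{k−1}^d ∘ ⋯ ∘ g_1^d ∈ C(Q_1^d, ℝ^{𝔡_{k+1}^d}). Then there exists K ∈ ℕ such that for every d ∈ ℕ and ε ∈ (0,1] there exists a DNN Φ with R(Φ) ∈ C(ℝ^{𝔡_1^d}, ℝ^{𝔡_{k+1}^d}), P(Φ) ≤ K·d^K·ε^{−c}, and ‖R(Φ)(x)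 − F_d(x)‖_p ≤ ε for all x ∈ Q_1^d. -/

import Mathlib

open scoped BigOperators ENNReal

noncomputable section

/-- A ReLU deep neural network with `L + 1` affine layers (so depth at least one),
layer dimensions `ℓ 0, ℓ 1, …, ℓ (L + 1)`, weight matrices `W k` and bias vectors `b k`
(values of `ℓ`, `W`, `b` beyond layer index `L` are irrelevant for the realization
and for the number of parameters). -/
structure DNN where
  L : ℕ
  ℓ : ℕ → ℕ
  W : (k : ℕ) → Matrix (Fin (ℓ (k + 1))) (Fin (ℓ k)) ℝ
  b : (k : ℕ) → Fin (ℓ (k + 1)) → ℝ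

namespace DNN

/-- The number of parameters `P(Φ) = ∑_{k=1}^{L} ℓ_k (ℓ_{k-1} + 1)` of a DNN. -/
def params (Φ : DNN) : ℕ :=
  ∑ k ∈ Finset.range (Φ.L + 1), Φ.ℓ (k + 1) * (Φ.ℓ k + 1)

/-- The `k`-th affine layer function `x ↦ W_k x + b_k`. -/
def affine (Φ : DNN) (k : ℕ) (x : Fin (Φ.ℓ k) → ℝ) : Fin (Φ.ℓ (k + 1)) → ℝ :=
  fun i => (∑ j, Φ.W k i j * x j) + Φ.b k i

/-- The value after `k` affine layers, each followed by the ReLU activation. -/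
def hidden (Φ : DNN) : (k : ℕ) → (Fin (Φ.ℓ 0) → ℝ) → (Fin (Φ.ℓ k) → ℝ)
  | 0 => id
  | k + 1 => fun x i => max (affine Φ k (hidden Φ k x) i) 0

/-- The realization `R(Φ)`: all affine layers with ReLU in between (no activation after
the last affine layer). -/
def realize (Φ : DNN) (x : Fin (Φ.ℓ 0) → ℝ) : Fin (Φ.ℓ (Φ.L + 1)) → ℝ :=
  affine Φ Φ.L (hidden Φ Φ.L x)

/-- `Φ.Realizes f` means that the realization of `Φ` is the function `f : ℝ^m → ℝ^n`
(in particular the input and output dimensions of `Φ` are `m` and `n`). -/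
def Realizes (Φ : DNN) {m n : ℕ} (f : (Fin m → ℝ) → (Fin n → ℝ)) : Prop :=
  ∃ (hm : Φ.ℓ 0 = m) (hn : Φ.ℓ (Φ.L + 1) = n),
    ∀ (x : Fin m → ℝ) (i : Fin n),
      f x i = realize Φ (fun j => x (Fin.cast hm j)) (Fin.cast hn.symm i)

end DNN

/-- The `ℓ^p`-norm on `ℝ^k` for `p ∈ [1,∞]`. -/
def lpNorm (p : ℝ≥0∞) {k : ℕ} (x : Fin k → ℝ) : ℝ :=
  if p = ∞ then ⨆ i, |x i| else (∑ i, |x i| ^ p.toReal) ^ (1 / p.toReal)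

/-- The hypercube `[a,b]^d ⊆ ℝ^d`. -/
def cube (d : ℕ) (a b : ℝ) : Set (Fin d → ℝ) :=
  Set.Icc (fun _ => a) (fun _ => b)

/-- `Cost p D f L ε`: the minimal number of parameters of a DNN whose realization
approximates `f` on `D` up to `ε` in the `ℓ^p`-norm and is `L`-Lipschitz on `D`
with respect to the `ℓ^p`-norm; `∞` if no such DNN exists. -/
def Cost (p : ℝ≥0∞) {m n : ℕ} (D : Set (Fin m → ℝ))
    (f : (Fin m → ℝ) → (Fin n → ℝ)) (L ε : ℝ) : ℝ≥0∞ :=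
  sInf { N : ℝ≥0∞ | ∃ Φ : DNN, ∃ g : (Fin m → ℝ) → (Fin n → ℝ),
    Φ.Realizes g ∧ N = (Φ.params : ℝ≥0∞) ∧
    (∀ x ∈ D, lpNorm p (g x - f x) ≤ ε) ∧
    (∀ x ∈ D, ∀ y ∈ D, lpNorm p (g x - g y) ≤ L * lpNorm p (x - y)) }

/-- Given block sizes `d : Fin n → ℕ`, the index in `Fin (∑ j, d j)` of the `l`-th
coordinate of the `i`-th block (blocks are arranged consecutively). -/
def blockIdx {n : ℕ} (d : Fin n → ℕ) (i : Fin n) (l : Fin (d i)) : Fin (∑ j, d j) :=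
  ⟨(∑ j ∈ Finset.univ.filter (fun j => j < i), d j) + l.1, by
    have h1 : l.1 < d i := l.2
    have h2 : (∑ j ∈ Finset.univ.filter (fun j => j < i), d j) + d i ≤ ∑ j, d j := by
      have hsplit := Finset.sum_filter_add_sum_filter_not Finset.univ (fun j => j < i) d
      have h3 : d i ≤ ∑ j ∈ Finset.univ.filter (fun j => ¬ j < i), d j :=
        Finset.single_le_sum (fun _ _ => Nat.zero_le _) (by simp)
      omega
    omega⟩

/-- The class `𝒫_{k,p}([a,b]^d, L)`: parallelizations `f = f_1 □ ⋯ □ f_m` of real-valued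
functions `f_i` of at most `k` variables that are `L`-Lipschitz w.r.t. the `ℓ^p`-norm. -/
def MemPLip (k : ℕ) (p : ℝ≥0∞) (a b L : ℝ) {d m : ℕ}
    (f : (Fin d → ℝ) → (Fin m → ℝ)) : Prop :=
  ∃ (dims : Fin m → ℕ) (hd : ∑ i, dims i = d) (g : ∀ i, (Fin (dims i) → ℝ) → ℝ),
    (∀ i, 0 < dims i) ∧ (∀ i, dims i ≤ k) ∧
    (∀ i, ∀ x ∈ cube (dims i) a b, ∀ y ∈ cube (dims i) a b,
      |g i x - g i y| ≤ L * lpNorm p (x - y)) ∧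
    (∀ x ∈ cube d a b, ∀ i : Fin m,
      f x i = g i (fun l => x (Fin.cast hd (blockIdx dims i l))))

/-- The class `M([a,b]^d)`: parallelizations of maximum functions `m_{d_1} □ ⋯ □ m_{d_m}`. -/
def MemMaxClass (a b : ℝ) {d m : ℕ} (f : (Fin d → ℝ) → (Fin m → ℝ)) : Prop :=
  ∃ (dims : Fin m → ℕ) (hd : ∑ i, dims i = d),
    (∀ i, 0 < dims i) ∧
    (∀ x ∈ cube d a b, ∀ i : Fin m,
      f x i = ⨆ l : Fin (dims i), x (Fin.cast hd (blockIdx dims i l)))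

/-- The class `P([a,b]^d)`: parallelizations of product functions `p_{d_1} □ ⋯ □ p_{d_m}`. -/
def MemProdClass (a b : ℝ) {d m : ℕ} (f : (Fin d → ℝ) → (Fin m → ℝ)) : Prop :=
  ∃ (dims : Fin m → ℕ) (hd : ∑ i, dims i = d),
    (∀ i, 0 < dims i) ∧
    (∀ x ∈ cube d a b, ∀ i : Fin m,
      f x i = ∏ l : Fin (dims i), x (Fin.cast hd (blockIdx dims i l)))

/-- `f` coincides on `[a,b]^d` with the extended maximum function
`𝔪_d(x) = (max{x_1}, max{x_1,x_2}, …, max{x_1,…,x_d})`. -/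
def IsExtMaxOn (a b : ℝ) {d m : ℕ} (f : (Fin d → ℝ) → (Fin m → ℝ)) : Prop :=
  ∃ h : d = m, ∀ x ∈ cube d a b, ∀ i : Fin m,
    f x i = (Finset.Iic (Fin.cast h.symm i)).sup' Finset.nonempty_Iic x

/-- `f` coincides on `[a,b]^d` with the extended product function
`𝔭_d(x) = (x_1, x_1 x_2, …, x_1 ⋯ x_d)`. -/
def IsExtProdOn (a b : ℝ) {d m : ℕ} (f : (Fin d → ℝ) → (Fin m → ℝ)) : Prop :=
  ∃ h : d = m, ∀ x ∈ cube d a b, ∀ i : Fin m,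
    f x i = ∏ j ∈ Finset.Iic (Fin.cast h.symm i), x j

/-- Iterated composition: `compSeq dims f k = f_{k-1} ∘ ⋯ ∘ f_1 ∘ f_0`. -/
def compSeq (dims : ℕ → ℕ) (f : ∀ i : ℕ, (Fin (dims i) → ℝ) → (Fin (dims (i + 1)) → ℝ)) :
    (k : ℕ) → (Fin (dims 0) → ℝ) → (Fin (dims k) → ℝ)
  | 0 => id
  | k + 1 => fun x => f k (compSeq dims f k x)



section Lemmas

lemma lpNorm_nonneg (p : ℝ≥0∞) {n : ℕ} (x : Fin n → ℝ) : 0 ≤ lpNorm p x := by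
  unfold lpNorm
  split
  · exact Real.iSup_nonneg fun i => abs_nonneg _
  · exact Real.rpow_nonneg (Finset.sum_nonneg fun i _ => Real.rpow_nonneg (abs_nonneg _) _) _

lemma lpNorm_mono (p : ℝ≥0∞) {n : ℕ} {u v : Fin n → ℝ} (h : ∀ i, |u i| ≤ |v i|) :
    lpNorm p u ≤ lpNorm p v := by
  unfold lpNorm
  split
  · rcases Nat.eq_zero_or_pos n with hn | hn
    · subst hn
      simp [Real.iSup_of_isEmpty]
    · exact ciSup_mono (Set.Finite.bddAbove (Set.finite_range _)) h
  · apply Real.rpow_le_rpow (Finset.sum_nonneg fun i _ => Real.rpow_nonneg (abs_nonneg _) _)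
    · exact Finset.sum_le_sum fun i _ => Real.rpow_le_rpow (abs_nonneg _) (h i) ENNReal.toReal_nonneg
    · positivity

lemma lpNorm_add_le (p : ℝ≥0∞) (hp : 1 ≤ p) {n : ℕ} (u v : Fin n → ℝ) :
    lpNorm p (u + v) ≤ lpNorm p u + lpNorm p v := by
  unfold lpNorm
  split
  · rcases Nat.eq_zero_or_pos n with hn | hn
    · subst hn; simp [Real.sSup_empty, Real.iSup_of_isEmpty]
    · have : Nonempty (Fin n) := ⟨⟨0, hn⟩⟩
      apply ciSup_le fun i => ?_
      calc |(u + v) i| ≤ |u i| + |v i| := abs_add_le _ _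
      _ ≤ (⨆ j, |u j|) + ⨆ j, |v j| :=
          add_le_add (le_ciSup (Set.Finite.bddAbove (Set.finite_range fun j => |u j|)) i)
            (le_ciSup (Set.Finite.bddAbove (Set.finite_range fun j => |v j|)) i)
  · have hp1 : (1:ℝ) ≤ p.toReal := by
      rename_i hne
      rw [← ENNReal.toReal_one]
      exact ENNReal.toReal_mono hne hp
    simpa using Real.Lp_add_le Finset.univ u v hp1

/-- the clipping function -/
def clip (a b t : ℝ) : ℝ := min b (max a t)

lemma clip_mem {a b : ℝ} (hab : a ≤ b) (t : ℝ) : a ≤ clip a b t ∧ clip a b t ≤ b :=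
  ⟨le_min hab (le_max_left _ _), min_le_left _ _⟩

lemma clip_eq_self {a b t : ℝ} (h1 : a ≤ t) (h2 : t ≤ b) : clip a b t = t := by
  unfold clip; rw [max_eq_right h1, min_eq_right h2]

lemma clip_lipschitz (a b s t : ℝ) : |clip a b s - clip a b t| ≤ |s - t| := by
  unfold clip
  calc |min b (max a s) - min b (max a t)| ≤ |max a s - max a t| := by
        have h := abs_max_sub_max_le_abs (-(max a s)) (-(max a t)) (-b)
        rw [show (-(max a s) ⊔ -b) = -(b ⊓ max a s) by rw [neg_inf]; rw [sup_comm],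
          show (-(max a t) ⊔ -b) = -(b ⊓ max a t) by rw [neg_inf]; rw [sup_comm]] at h
        simpa [neg_add_eq_sub, abs_sub_comm] using h
  _ ≤ |s - t| := by
        have := abs_max_sub_max_le_abs s t a
        simpa [max_comm] using this

lemma clip_formula {a b : ℝ} (hab : a ≤ b) (t : ℝ) :
    a + max (t - a) 0 - max (t - b) 0 = clip a b t := by
  unfold clip
  rcases le_total t a with h | h
  · rw [max_eq_right (by linarith), max_eq_right (by linarith), max_eq_left h]
    simp [min_eq_right hab]
  · rcases le_total t b with h' | h'
    · rw [max_eq_left (by linarith), max_eq_right (by linarith), max_eq_right h,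
        min_eq_right h']
      ring
    · rw [max_eq_left (by linarith), max_eq_left (by linarith), max_eq_right (le_trans hab h'),
        min_eq_left h']
      ring

end Lemmas
section Comp

lemma sum_fin_cast {m n : ℕ} (h : m = n) (f : Fin n → ℝ) :
    ∑ j : Fin m, f (Fin.cast h j) = ∑ j, f j := by subst h; rfl

namespace DNN

lemma W_congr (Φ : DNN) {s t : ℕ} (h : s = t) (i : Fin (Φ.ℓ (s + 1))) (j : Fin (Φ.ℓ s)) :
    Φ.W s i j = Φ.W t (Fin.cast (by rw [h]) i) (Fin.cast (by rw [h]) j) := by subst h; rfl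

lemma b_congr (Φ : DNN) {s t : ℕ} (h : s = t) (i : Fin (Φ.ℓ (s + 1))) :
    Φ.b s i = Φ.b t (Fin.cast (by rw [h]) i) := by subst h; rfl

lemma hidden_congr (Φ : DNN) {s t : ℕ} (h : s = t) (x : Fin (Φ.ℓ 0) → ℝ) (i : Fin (Φ.ℓ s)) :
    Φ.hidden s x i = Φ.hidden t x (Fin.cast (by rw [h]) i) := by subst h; rfl

/-- layer dimensions of the composition-with-clipping of two DNNs -/
def ccℓ (Φ₁ Φ₂ : DNN) (k : ℕ) : ℕ :=
  if k ≤ Φ₁.L then Φ₁.ℓ k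
  else if k = Φ₁.L + 1 then 2 * Φ₂.ℓ 0
  else Φ₂.ℓ (k - (Φ₁.L + 1))

lemma ccℓ_le (Φ₁ Φ₂ : DNN) {k : ℕ} (h : k ≤ Φ₁.L) : ccℓ Φ₁ Φ₂ k = Φ₁.ℓ k := if_pos h

lemma ccℓ_mid (Φ₁ Φ₂ : DNN) : ccℓ Φ₁ Φ₂ (Φ₁.L + 1) = 2 * Φ₂.ℓ 0 := by
  rw [ccℓ, if_neg (by omega), if_pos rfl]

lemma ccℓ_ge (Φ₁ Φ₂ : DNN) {k : ℕ} (h : Φ₁.L + 2 ≤ k) :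
    ccℓ Φ₁ Φ₂ k = Φ₂.ℓ (k - (Φ₁.L + 1)) := by
  rw [ccℓ, if_neg (by omega), if_neg (by omega)]

lemma ccℓ_ge' (Φ₁ Φ₂ : DNN) {k : ℕ} (h : Φ₁.L + 1 ≤ k) :
    ccℓ Φ₁ Φ₂ (k + 1) = Φ₂.ℓ ((k - (Φ₁.L + 1)) + 1) := by
  rw [ccℓ_ge Φ₁ Φ₂ (by omega)]; congr 1; omega

lemma ccℓ_last (Φ₁ Φ₂ : DNN) :
    ccℓ Φ₁ Φ₂ (Φ₁.L + Φ₂.L + 1 + 1) = Φ₂.ℓ (Φ₂.L + 1) := by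
  rw [ccℓ_ge Φ₁ Φ₂ (by omega)]; congr 1; omega

/-- weights of the composition-with-clipping -/
def ccW (Φ₁ Φ₂ : DNN) (hI : Φ₁.ℓ (Φ₁.L + 1) = Φ₂.ℓ 0) (k : ℕ) :
    Matrix (Fin (ccℓ Φ₁ Φ₂ (k + 1))) (Fin (ccℓ Φ₁ Φ₂ k)) ℝ :=
  if h1 : k < Φ₁.L then
    fun i j => Φ₁.W k (Fin.cast (ccℓ_le Φ₁ Φ₂ (by omega)) i)
      (Fin.cast (ccℓ_le Φ₁ Φ₂ (by omega)) j)
  else if h2 : k = Φ₁.L then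
    fun i j => Φ₁.W Φ₁.L
      ⟨i.1 % Φ₂.ℓ 0, by
        have h3 := i.2
        have h4 : ccℓ Φ₁ Φ₂ (k + 1) = 2 * Φ₂.ℓ 0 := by rw [h2]; exact ccℓ_mid Φ₁ Φ₂
        rw [hI]; exact Nat.mod_lt _ (by omega)⟩
      (Fin.cast (by rw [← h2]; exact ccℓ_le Φ₁ Φ₂ (by omega)) j)
  else if h3 : k = Φ₁.L + 1 then
    fun i j =>
      (if j.1 < Φ₂.ℓ 0 then (1 : ℝ) else -1) * Φ₂.W 0
        (Fin.cast (by rw [h3]; rw [ccℓ_ge' Φ₁ Φ₂ (by omega)]; congr 1; omega) i)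
        ⟨j.1 % Φ₂.ℓ 0, by
          have h4 := j.2
          have h5 : ccℓ Φ₁ Φ₂ k = 2 * Φ₂.ℓ 0 := by rw [h3]; exact ccℓ_mid Φ₁ Φ₂
          exact Nat.mod_lt _ (by omega)⟩
  else
    fun i j => Φ₂.W (k - (Φ₁.L + 1))
      (Fin.cast (ccℓ_ge' Φ₁ Φ₂ (by omega)) i)
      (Fin.cast (ccℓ_ge Φ₁ Φ₂ (by omega)) j)

/-- biases of the composition-with-clipping -/
def ccB (Φ₁ Φ₂ : DNN) (hI : Φ₁.ℓ (Φ₁.L + 1) = Φ₂.ℓ 0) (a β : ℝ) (k : ℕ) :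
    Fin (ccℓ Φ₁ Φ₂ (k + 1)) → ℝ :=
  if h1 : k < Φ₁.L then
    fun i => Φ₁.b k (Fin.cast (ccℓ_le Φ₁ Φ₂ (by omega)) i)
  else if h2 : k = Φ₁.L then
    fun i => Φ₁.b Φ₁.L
      ⟨i.1 % Φ₂.ℓ 0, by
        have h3 := i.2
        have h4 : ccℓ Φ₁ Φ₂ (k + 1) = 2 * Φ₂.ℓ 0 := by rw [h2]; exact ccℓ_mid Φ₁ Φ₂
        rw [hI]; exact Nat.mod_lt _ (by omega)⟩
      - (if i.1 < Φ₂.ℓ 0 then a else β)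
  else if h3 : k = Φ₁.L + 1 then
    fun i =>
      Φ₂.b 0 (Fin.cast (by rw [h3]; rw [ccℓ_ge' Φ₁ Φ₂ (by omega)]; congr 1; omega) i)
      + a * ∑ j, Φ₂.W 0
          (Fin.cast (by rw [h3]; rw [ccℓ_ge' Φ₁ Φ₂ (by omega)]; congr 1; omega) i) j
  else
    fun i => Φ₂.b (k - (Φ₁.L + 1)) (Fin.cast (ccℓ_ge' Φ₁ Φ₂ (by omega)) i)

/-- composition-with-clipping of two DNNs: realizes `R(Φ₂) ∘ clip_{[a,β]} ∘ R(Φ₁)`. -/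
def compClip (Φ₁ Φ₂ : DNN) (hI : Φ₁.ℓ (Φ₁.L + 1) = Φ₂.ℓ 0) (a β : ℝ) : DNN :=
  ⟨Φ₁.L + Φ₂.L + 1, ccℓ Φ₁ Φ₂, ccW Φ₁ Φ₂ hI, ccB Φ₁ Φ₂ hI a β⟩

lemma compClip_params (Φ₁ Φ₂ : DNN) (hI : Φ₁.ℓ (Φ₁.L + 1) = Φ₂.ℓ 0) (a β : ℝ) :
    (compClip Φ₁ Φ₂ hI a β).params ≤ 2 * Φ₁.params + 2 * Φ₂.params := by
  have hsplit : (compClip Φ₁ Φ₂ hI a β).params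
      = (∑ k ∈ Finset.range Φ₁.L, ccℓ Φ₁ Φ₂ (k + 1) * (ccℓ Φ₁ Φ₂ k + 1))
        + ((ccℓ Φ₁ Φ₂ (Φ₁.L + 0 + 1) * (ccℓ Φ₁ Φ₂ (Φ₁.L + 0) + 1))
          + (ccℓ Φ₁ Φ₂ (Φ₁.L + 1 + 1) * (ccℓ Φ₁ Φ₂ (Φ₁.L + 1) + 1))
          + ∑ r ∈ Finset.range Φ₂.L,
              ccℓ Φ₁ Φ₂ (Φ₁.L + (2 + r) + 1) * (ccℓ Φ₁ Φ₂ (Φ₁.L + (2 + r)) + 1)) := by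
    show ∑ k ∈ Finset.range (Φ₁.L + Φ₂.L + 1 + 1), ccℓ Φ₁ Φ₂ (k + 1) * (ccℓ Φ₁ Φ₂ k + 1) = _
    rw [show Φ₁.L + Φ₂.L + 1 + 1 = Φ₁.L + (2 + Φ₂.L) by omega, Finset.sum_range_add,
      Finset.sum_range_add, Finset.sum_range_succ, Finset.sum_range_succ,
      Finset.sum_range_zero, zero_add]
  have e0 : (∑ k ∈ Finset.range Φ₁.L, ccℓ Φ₁ Φ₂ (k + 1) * (ccℓ Φ₁ Φ₂ k + 1))
      = ∑ k ∈ Finset.range Φ₁.L, Φ₁.ℓ (k + 1) * (Φ₁.ℓ k + 1) :=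
    Finset.sum_congr rfl fun k hk => by
      rw [ccℓ_le Φ₁ Φ₂ (by have := Finset.mem_range.1 hk; omega), ccℓ_le Φ₁ Φ₂
        (by have := Finset.mem_range.1 hk; omega)]
  have eR : (∑ r ∈ Finset.range Φ₂.L,
        ccℓ Φ₁ Φ₂ (Φ₁.L + (2 + r) + 1) * (ccℓ Φ₁ Φ₂ (Φ₁.L + (2 + r)) + 1))
      = ∑ r ∈ Finset.range Φ₂.L, Φ₂.ℓ (r + 1 + 1) * (Φ₂.ℓ (r + 1) + 1) :=
    Finset.sum_congr rfl fun r _ => by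
      rw [show ccℓ Φ₁ Φ₂ (Φ₁.L + (2 + r) + 1) = Φ₂.ℓ (r + 1 + 1) by
          rw [ccℓ_ge Φ₁ Φ₂ (by omega)]; congr 1; omega,
        show ccℓ Φ₁ Φ₂ (Φ₁.L + (2 + r)) = Φ₂.ℓ (r + 1) by
          rw [ccℓ_ge Φ₁ Φ₂ (by omega)]; congr 1; omega]
  have hF0 : ccℓ Φ₁ Φ₂ (Φ₁.L + 0 + 1) * (ccℓ Φ₁ Φ₂ (Φ₁.L + 0) + 1)
      = 2 * (Φ₁.ℓ (Φ₁.L + 1) * (Φ₁.ℓ Φ₁.L + 1)) := by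
    rw [show Φ₁.L + 0 + 1 = Φ₁.L + 1 by omega, show Φ₁.L + 0 = Φ₁.L by omega,
      ccℓ_mid, ccℓ_le Φ₁ Φ₂ le_rfl, hI]; ring
  have hF1 : ccℓ Φ₁ Φ₂ (Φ₁.L + 1 + 1) * (ccℓ Φ₁ Φ₂ (Φ₁.L + 1) + 1)
      = Φ₂.ℓ 1 * (2 * Φ₂.ℓ 0 + 1) := by
    rw [ccℓ_mid, show ccℓ Φ₁ Φ₂ (Φ₁.L + 1 + 1) = Φ₂.ℓ 1 by
      rw [ccℓ_ge Φ₁ Φ₂ (by omega)]; congr 1; omega]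
  have hP1 : Φ₁.params = (∑ k ∈ Finset.range Φ₁.L, Φ₁.ℓ (k + 1) * (Φ₁.ℓ k + 1))
      + Φ₁.ℓ (Φ₁.L + 1) * (Φ₁.ℓ Φ₁.L + 1) := Finset.sum_range_succ _ _
  have hP2 : Φ₂.params = (∑ r ∈ Finset.range Φ₂.L, Φ₂.ℓ (r + 1 + 1) * (Φ₂.ℓ (r + 1) + 1))
      + Φ₂.ℓ 1 * (Φ₂.ℓ 0 + 1) := Finset.sum_range_succ' _ _
  have hmul : Φ₂.ℓ 1 * (2 * Φ₂.ℓ 0 + 1) ≤ 2 * (Φ₂.ℓ 1 * (Φ₂.ℓ 0 + 1)) := by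
    calc Φ₂.ℓ 1 * (2 * Φ₂.ℓ 0 + 1) ≤ Φ₂.ℓ 1 * (2 * (Φ₂.ℓ 0 + 1)) :=
          Nat.mul_le_mul_left _ (by omega)
      _ = 2 * (Φ₂.ℓ 1 * (Φ₂.ℓ 0 + 1)) := by ring
  rw [hsplit, e0, eR, hF0, hF1, hP1, hP2]
  generalize (∑ k ∈ Finset.range Φ₁.L, Φ₁.ℓ (k + 1) * (Φ₁.ℓ k + 1)) = A
  generalize hq : Φ₁.ℓ (Φ₁.L + 1) * (Φ₁.ℓ Φ₁.L + 1) = q at *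
  generalize (∑ r ∈ Finset.range Φ₂.L, Φ₂.ℓ (r + 1 + 1) * (Φ₂.ℓ (r + 1) + 1)) = S
  omega

lemma ccℓ_shift (Φ₁ Φ₂ : DNN) (j : ℕ) :
    ccℓ Φ₁ Φ₂ (Φ₁.L + 1 + j + 1) = Φ₂.ℓ (j + 1) := by
  rw [ccℓ_ge Φ₁ Φ₂ (by omega)]; congr 1; omega

lemma affine_congr (Φ : DNN) {s t : ℕ} (h : s = t) (v : Fin (Φ.ℓ s) → ℝ)
    (i : Fin (Φ.ℓ (s + 1))) :
    Φ.affine s v i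
      = Φ.affine t (fun j => v (Fin.cast (by rw [h]) j)) (Fin.cast (by rw [h]) i) := by
  subst h; rfl

lemma cc_hidden_left (Φ₁ Φ₂ : DNN) (hI : Φ₁.ℓ (Φ₁.L + 1) = Φ₂.ℓ 0) (a β : ℝ)
    (x : Fin (ccℓ Φ₁ Φ₂ 0) → ℝ) :
    ∀ (k : ℕ) (hk : k ≤ Φ₁.L) (m : Fin (ccℓ Φ₁ Φ₂ k)),
      (compClip Φ₁ Φ₂ hI a β).hidden k x m
        = Φ₁.hidden k (fun j' => x (Fin.cast (ccℓ_le Φ₁ Φ₂ (Nat.zero_le _)).symm j'))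
            (Fin.cast (ccℓ_le Φ₁ Φ₂ hk) m) := by
  intro k
  induction k with
  | zero =>
    intro hk m
    exact congrArg x (Fin.ext rfl)
  | succ k ih =>
    intro hk m
    have hklt : k < Φ₁.L := hk
    have pfm : ccℓ Φ₁ Φ₂ (k + 1) = Φ₁.ℓ (k + 1) := ccℓ_le Φ₁ Φ₂ hk
    have pfk : ccℓ Φ₁ Φ₂ k = Φ₁.ℓ k := ccℓ_le Φ₁ Φ₂ hklt.le
    show max ((compClip Φ₁ Φ₂ hI a β).affine k ((compClip Φ₁ Φ₂ hI a β).hidden k x) m) 0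
      = max (Φ₁.affine k
          (Φ₁.hidden k (fun j' => x (Fin.cast (ccℓ_le Φ₁ Φ₂ (Nat.zero_le _)).symm j')))
          (Fin.cast pfm m)) 0
    congr 1
    show (∑ j, ccW Φ₁ Φ₂ hI k m j * (compClip Φ₁ Φ₂ hI a β).hidden k x j)
        + ccB Φ₁ Φ₂ hI a β k m
      = (∑ j', Φ₁.W k (Fin.cast pfm m) j'
          * Φ₁.hidden k (fun j' => x (Fin.cast (ccℓ_le Φ₁ Φ₂ (Nat.zero_le _)).symm j')) j')
        + Φ₁.b k (Fin.cast pfm m)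
    rw [ccB, dif_pos hklt]
    have hW : ∀ j, ccW Φ₁ Φ₂ hI k m j = Φ₁.W k (Fin.cast pfm m) (Fin.cast pfk j) :=
      fun j => by refine (congrFun (congrFun (dif_pos hklt) m) j).trans ?_; rfl
    simp only [hW]
    simp only [ih hklt.le]
    rw [← sum_fin_cast pfk
      (fun j' => Φ₁.W k (Fin.cast pfm m) j'
        * Φ₁.hidden k (fun j' => x (Fin.cast (ccℓ_le Φ₁ Φ₂ (Nat.zero_le _)).symm j')) j')]

lemma ccW_mid1_apply (Φ₁ Φ₂ : DNN) (hI : Φ₁.ℓ (Φ₁.L + 1) = Φ₂.ℓ 0)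
    (i : Fin (ccℓ Φ₁ Φ₂ (Φ₁.L + 1))) (j : Fin (ccℓ Φ₁ Φ₂ Φ₁.L)) :
    ccW Φ₁ Φ₂ hI Φ₁.L i j
      = Φ₁.W Φ₁.L
          ⟨i.1 % Φ₂.ℓ 0, by
            have h3 := i.2; have h4 := ccℓ_mid Φ₁ Φ₂
            rw [hI]; exact Nat.mod_lt _ (by omega)⟩
          (Fin.cast (ccℓ_le Φ₁ Φ₂ le_rfl) j) := by
  refine (congrFun (congrFun ((dif_neg (show ¬ Φ₁.L < Φ₁.L by omega)).trans
    (dif_pos rfl)) i) j).trans ?_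
  rfl

lemma ccB_mid1_apply (Φ₁ Φ₂ : DNN) (hI : Φ₁.ℓ (Φ₁.L + 1) = Φ₂.ℓ 0) (a β : ℝ)
    (i : Fin (ccℓ Φ₁ Φ₂ (Φ₁.L + 1))) :
    ccB Φ₁ Φ₂ hI a β Φ₁.L i
      = Φ₁.b Φ₁.L
          ⟨i.1 % Φ₂.ℓ 0, by
            have h3 := i.2; have h4 := ccℓ_mid Φ₁ Φ₂
            rw [hI]; exact Nat.mod_lt _ (by omega)⟩
        - (if i.1 < Φ₂.ℓ 0 then a else β) := by
  rw [ccB, dif_neg (by omega), dif_pos rfl]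

lemma ccW_mid2_apply (Φ₁ Φ₂ : DNN) (hI : Φ₁.ℓ (Φ₁.L + 1) = Φ₂.ℓ 0)
    (i : Fin (Φ₂.ℓ 1)) (j : Fin (ccℓ Φ₁ Φ₂ (Φ₁.L + 1))) :
    ccW Φ₁ Φ₂ hI (Φ₁.L + 1) (Fin.cast (ccℓ_shift Φ₁ Φ₂ 0).symm i) j
      = (if j.1 < Φ₂.ℓ 0 then (1 : ℝ) else -1) * Φ₂.W 0 i
          ⟨j.1 % Φ₂.ℓ 0, by
            have h4 := j.2; have h5 := ccℓ_mid Φ₁ Φ₂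
            exact Nat.mod_lt _ (by omega)⟩ := by
  refine (congrFun (congrFun ((dif_neg (show ¬ Φ₁.L + 1 < Φ₁.L by omega)).trans
    ((dif_neg (show ¬ Φ₁.L + 1 = Φ₁.L by omega)).trans (dif_pos rfl))) _) j).trans ?_
  simp [Fin.cast_cast]

lemma ccB_mid2_apply (Φ₁ Φ₂ : DNN) (hI : Φ₁.ℓ (Φ₁.L + 1) = Φ₂.ℓ 0) (a β : ℝ)
    (i : Fin (Φ₂.ℓ 1)) :
    ccB Φ₁ Φ₂ hI a β (Φ₁.L + 1) (Fin.cast (ccℓ_shift Φ₁ Φ₂ 0).symm i)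
      = Φ₂.b 0 i + a * ∑ j, Φ₂.W 0 i j := by
  rw [ccB, dif_neg (by omega), dif_neg (by omega), dif_pos rfl]
  simp [Fin.cast_cast]

lemma ccW_right_apply (Φ₁ Φ₂ : DNN) (hI : Φ₁.ℓ (Φ₁.L + 1) = Φ₂.ℓ 0) (j : ℕ)
    (i : Fin (Φ₂.ℓ (j + 1 + 1))) (jj : Fin (ccℓ Φ₁ Φ₂ (Φ₁.L + 1 + (j + 1)))) :
    ccW Φ₁ Φ₂ hI (Φ₁.L + 1 + (j + 1)) (Fin.cast (ccℓ_shift Φ₁ Φ₂ (j + 1)).symm i) jj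
      = Φ₂.W (j + 1) i (Fin.cast (ccℓ_shift Φ₁ Φ₂ j) jj) := by
  refine (congrFun (congrFun ((dif_neg (show ¬ Φ₁.L + 1 + (j + 1) < Φ₁.L by omega)).trans
    ((dif_neg (show ¬ Φ₁.L + 1 + (j + 1) = Φ₁.L by omega)).trans
    (dif_neg (show ¬ Φ₁.L + 1 + (j + 1) = Φ₁.L + 1 by omega)))) _) jj).trans ?_
  rw [W_congr Φ₂ (show Φ₁.L + 1 + (j + 1) - (Φ₁.L + 1) = j + 1 by omega)]
  simp [Fin.cast_cast]

lemma ccB_right_apply (Φ₁ Φ₂ : DNN) (hI : Φ₁.ℓ (Φ₁.L + 1) = Φ₂.ℓ 0) (a β : ℝ) (j : ℕ)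
    (i : Fin (Φ₂.ℓ (j + 1 + 1))) :
    ccB Φ₁ Φ₂ hI a β (Φ₁.L + 1 + (j + 1)) (Fin.cast (ccℓ_shift Φ₁ Φ₂ (j + 1)).symm i)
      = Φ₂.b (j + 1) i := by
  rw [ccB, dif_neg (by omega), dif_neg (by omega), dif_neg (by omega)]
  rw [b_congr Φ₂ (show Φ₁.L + 1 + (j + 1) - (Φ₁.L + 1) = j + 1 by omega)]
  simp [Fin.cast_cast]

lemma cc_hidden_mid (Φ₁ Φ₂ : DNN) (hI : Φ₁.ℓ (Φ₁.L + 1) = Φ₂.ℓ 0) (a β : ℝ)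
    (x : Fin (ccℓ Φ₁ Φ₂ 0) → ℝ) (m : Fin (ccℓ Φ₁ Φ₂ (Φ₁.L + 1))) :
    (compClip Φ₁ Φ₂ hI a β).hidden (Φ₁.L + 1) x m
      = max (Φ₁.realize (fun j' => x (Fin.cast (ccℓ_le Φ₁ Φ₂ (Nat.zero_le _)).symm j'))
            ⟨m.1 % Φ₂.ℓ 0, by
              have h3 := m.2; have h4 := ccℓ_mid Φ₁ Φ₂
              rw [hI]; exact Nat.mod_lt _ (by omega)⟩
          - (if m.1 < Φ₂.ℓ 0 then a else β)) 0 := by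
  show max ((compClip Φ₁ Φ₂ hI a β).affine Φ₁.L
      ((compClip Φ₁ Φ₂ hI a β).hidden Φ₁.L x) m) 0 = _
  congr 1
  show (∑ j, ccW Φ₁ Φ₂ hI Φ₁.L m j * (compClip Φ₁ Φ₂ hI a β).hidden Φ₁.L x j)
      + ccB Φ₁ Φ₂ hI a β Φ₁.L m = _
  simp only [ccW_mid1_apply Φ₁ Φ₂ hI, ccB_mid1_apply Φ₁ Φ₂ hI a β,
    cc_hidden_left Φ₁ Φ₂ hI a β x Φ₁.L le_rfl]
  rw [sum_fin_cast (ccℓ_le Φ₁ Φ₂ (le_refl Φ₁.L))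
    (fun j' => Φ₁.W Φ₁.L
      ⟨m.1 % Φ₂.ℓ 0, by
        have h3 := m.2; have h4 := ccℓ_mid Φ₁ Φ₂
        rw [hI]; exact Nat.mod_lt _ (by omega)⟩ j'
      * Φ₁.hidden Φ₁.L (fun j' => x (Fin.cast (ccℓ_le Φ₁ Φ₂ (Nat.zero_le _)).symm j')) j')]
  show _ = Φ₁.affine Φ₁.L
      (Φ₁.hidden Φ₁.L (fun j' => x (Fin.cast (ccℓ_le Φ₁ Φ₂ (Nat.zero_le _)).symm j'))) _
    - _
  rw [DNN.affine]
  ring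

lemma cc_affine_right (Φ₁ Φ₂ : DNN) (hI : Φ₁.ℓ (Φ₁.L + 1) = Φ₂.ℓ 0) (a β : ℝ)
    (hab : a ≤ β) (x : Fin (ccℓ Φ₁ Φ₂ 0) → ℝ) :
    ∀ (j : ℕ) (m : Fin (Φ₂.ℓ (j + 1))),
      (compClip Φ₁ Φ₂ hI a β).affine (Φ₁.L + 1 + j)
          ((compClip Φ₁ Φ₂ hI a β).hidden (Φ₁.L + 1 + j) x)
          (Fin.cast (ccℓ_shift Φ₁ Φ₂ j).symm m)
        = Φ₂.affine j (Φ₂.hidden j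
            (fun t => clip a β
              (Φ₁.realize (fun j' => x (Fin.cast (ccℓ_le Φ₁ Φ₂ (Nat.zero_le _)).symm j'))
                (Fin.cast hI.symm t)))) m := by
  intro j
  induction j with
  | zero =>
    intro m
    have h2N : Φ₂.ℓ 0 + Φ₂.ℓ 0 = ccℓ Φ₁ Φ₂ (Φ₁.L + 1) := by rw [ccℓ_mid]; omega
    show (∑ jj, ccW Φ₁ Φ₂ hI (Φ₁.L + 1) (Fin.cast (ccℓ_shift Φ₁ Φ₂ 0).symm m) jj
          * (compClip Φ₁ Φ₂ hI a β).hidden (Φ₁.L + 1) x jj)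
        + ccB Φ₁ Φ₂ hI a β (Φ₁.L + 1) (Fin.cast (ccℓ_shift Φ₁ Φ₂ 0).symm m)
      = (∑ t, Φ₂.W 0 m t
          * (fun t => clip a β
              (Φ₁.realize (fun j' => x (Fin.cast (ccℓ_le Φ₁ Φ₂ (Nat.zero_le _)).symm j'))
                (Fin.cast hI.symm t))) t)
        + Φ₂.b 0 m
    simp only [ccW_mid2_apply Φ₁ Φ₂ hI, ccB_mid2_apply Φ₁ Φ₂ hI a β,
      cc_hidden_mid Φ₁ Φ₂ hI a β x]
    rw [← sum_fin_cast h2N, Fin.sum_univ_add]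
    have e1 : ∀ t : Fin (Φ₂.ℓ 0),
        (if (Fin.cast h2N (Fin.castAdd (Φ₂.ℓ 0) t)).1 < Φ₂.ℓ 0 then (1 : ℝ) else -1)
          * Φ₂.W 0 m ⟨(Fin.cast h2N (Fin.castAdd (Φ₂.ℓ 0) t)).1 % Φ₂.ℓ 0,
              Nat.mod_lt _ (by have := t.2; omega)⟩
          * max (Φ₁.realize (fun j' => x (Fin.cast (ccℓ_le Φ₁ Φ₂ (Nat.zero_le _)).symm j'))
                ⟨(Fin.cast h2N (Fin.castAdd (Φ₂.ℓ 0) t)).1 % Φ₂.ℓ 0, by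
                  rw [hI]; exact Nat.mod_lt _ (by have := t.2; omega)⟩
              - (if (Fin.cast h2N (Fin.castAdd (Φ₂.ℓ 0) t)).1 < Φ₂.ℓ 0 then a else β)) 0
        = Φ₂.W 0 m t
          * max (Φ₁.realize (fun j' => x (Fin.cast (ccℓ_le Φ₁ Φ₂ (Nat.zero_le _)).symm j'))
              (Fin.cast hI.symm t) - a) 0 := by
      intro t
      have hv : (Fin.cast h2N (Fin.castAdd (Φ₂.ℓ 0) t)).1 = t.1 := rfl
      simp only [hv]
      rw [if_pos t.2, if_pos t.2, one_mul]
      have hidx : (⟨t.1 % Φ₂.ℓ 0, Nat.mod_lt _ (by have := t.2; omega)⟩ : Fin (Φ₂.ℓ 0)) = t :=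
        Fin.ext (Nat.mod_eq_of_lt t.2)
      have hidx2 : (⟨t.1 % Φ₂.ℓ 0, by
            rw [hI]; exact Nat.mod_lt _ (by have := t.2; omega)⟩ : Fin (Φ₁.ℓ (Φ₁.L + 1)))
          = Fin.cast hI.symm t :=
        Fin.ext (Nat.mod_eq_of_lt t.2)
      rw [hidx, hidx2]
    have e2 : ∀ t : Fin (Φ₂.ℓ 0),
        (if (Fin.cast h2N (Fin.natAdd (Φ₂.ℓ 0) t)).1 < Φ₂.ℓ 0 then (1 : ℝ) else -1)
          * Φ₂.W 0 m ⟨(Fin.cast h2N (Fin.natAdd (Φ₂.ℓ 0) t)).1 % Φ₂.ℓ 0,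
              Nat.mod_lt _ (by have := t.2; omega)⟩
          * max (Φ₁.realize (fun j' => x (Fin.cast (ccℓ_le Φ₁ Φ₂ (Nat.zero_le _)).symm j'))
                ⟨(Fin.cast h2N (Fin.natAdd (Φ₂.ℓ 0) t)).1 % Φ₂.ℓ 0, by
                  rw [hI]; exact Nat.mod_lt _ (by have := t.2; omega)⟩
              - (if (Fin.cast h2N (Fin.natAdd (Φ₂.ℓ 0) t)).1 < Φ₂.ℓ 0 then a else β)) 0
        = -(Φ₂.W 0 m t
          * max (Φ₁.realize (fun j' => x (Fin.cast (ccℓ_le Φ₁ Φ₂ (Nat.zero_le _)).symm j'))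
              (Fin.cast hI.symm t) - β) 0) := by
      intro t
      have hv : (Fin.cast h2N (Fin.natAdd (Φ₂.ℓ 0) t)).1 = Φ₂.ℓ 0 + t.1 := rfl
      have hmod : (Φ₂.ℓ 0 + t.1) % Φ₂.ℓ 0 = t.1 := by
        rw [Nat.add_mod_left]; exact Nat.mod_eq_of_lt t.2
      simp only [hv]
      rw [if_neg (by have := t.2; omega), if_neg (by have := t.2; omega), neg_one_mul]
      have hidx : (⟨(Φ₂.ℓ 0 + t.1) % Φ₂.ℓ 0, Nat.mod_lt _ (by have := t.2; omega)⟩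
            : Fin (Φ₂.ℓ 0)) = t := Fin.ext hmod
      have hidx2 : (⟨(Φ₂.ℓ 0 + t.1) % Φ₂.ℓ 0, by
            rw [hI]; exact Nat.mod_lt _ (by have := t.2; omega)⟩ : Fin (Φ₁.ℓ (Φ₁.L + 1)))
          = Fin.cast hI.symm t :=
        Fin.ext hmod
      rw [hidx, hidx2, neg_mul]
    rw [Finset.sum_congr rfl fun t _ => e1 t, Finset.sum_congr rfl fun t _ => e2 t]
    simp only [← clip_formula hab]
    simp only [mul_sub, mul_add, Finset.sum_add_distrib, Finset.sum_sub_distrib,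
      Finset.sum_neg_distrib]
    rw [← Finset.sum_mul]
    ring
  | succ j ih =>
    intro m
    have hhid : ∀ jj : Fin (ccℓ Φ₁ Φ₂ (Φ₁.L + 1 + j + 1)),
        (compClip Φ₁ Φ₂ hI a β).hidden (Φ₁.L + 1 + (j + 1)) x jj
          = Φ₂.hidden (j + 1)
              (fun t => clip a β
                (Φ₁.realize (fun j' => x (Fin.cast (ccℓ_le Φ₁ Φ₂ (Nat.zero_le _)).symm j'))
                  (Fin.cast hI.symm t)))
              (Fin.cast (ccℓ_shift Φ₁ Φ₂ j) jj) := by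
      intro jj
      show max ((compClip Φ₁ Φ₂ hI a β).affine (Φ₁.L + 1 + j)
          ((compClip Φ₁ Φ₂ hI a β).hidden (Φ₁.L + 1 + j) x) jj) 0 = max _ 0
      congr 1
      exact ih (Fin.cast (ccℓ_shift Φ₁ Φ₂ j) jj)
    show (∑ jj : Fin (ccℓ Φ₁ Φ₂ (Φ₁.L + 1 + j + 1)), ccW Φ₁ Φ₂ hI (Φ₁.L + 1 + (j + 1))
          (Fin.cast (ccℓ_shift Φ₁ Φ₂ (j + 1)).symm m) jj
          * (compClip Φ₁ Φ₂ hI a β).hidden (Φ₁.L + 1 + (j + 1)) x jj)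
        + ccB Φ₁ Φ₂ hI a β (Φ₁.L + 1 + (j + 1)) (Fin.cast (ccℓ_shift Φ₁ Φ₂ (j + 1)).symm m)
      = _
    simp only [ccW_right_apply Φ₁ Φ₂ hI j, ccB_right_apply Φ₁ Φ₂ hI a β j, hhid]
    rw [sum_fin_cast (ccℓ_shift Φ₁ Φ₂ j)
      (fun t => Φ₂.W (j + 1) m t
        * Φ₂.hidden (j + 1)
            (fun t => clip a β
              (Φ₁.realize (fun j' => x (Fin.cast (ccℓ_le Φ₁ Φ₂ (Nat.zero_le _)).symm j'))
                (Fin.cast hI.symm t))) t)]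
    rfl

lemma compClip_realize (Φ₁ Φ₂ : DNN) (hI : Φ₁.ℓ (Φ₁.L + 1) = Φ₂.ℓ 0) (a β : ℝ)
    (hab : a ≤ β) (x : Fin ((compClip Φ₁ Φ₂ hI a β).ℓ 0) → ℝ)
    (i : Fin ((compClip Φ₁ Φ₂ hI a β).ℓ ((compClip Φ₁ Φ₂ hI a β).L + 1))) :
    (compClip Φ₁ Φ₂ hI a β).realize x i =
      Φ₂.realize
        (fun t => clip a β
          (Φ₁.realize (fun j' => x (Fin.cast (ccℓ_le Φ₁ Φ₂ (Nat.zero_le _)).symm j'))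
            (Fin.cast hI.symm t)))
        (Fin.cast (ccℓ_last Φ₁ Φ₂) i) := by
  have heq : Φ₁.L + Φ₂.L + 1 = Φ₁.L + 1 + Φ₂.L := by omega
  show (compClip Φ₁ Φ₂ hI a β).affine (Φ₁.L + Φ₂.L + 1)
      ((compClip Φ₁ Φ₂ hI a β).hidden (Φ₁.L + Φ₂.L + 1) x) i = _
  refine (affine_congr (compClip Φ₁ Φ₂ hI a β) heq _ _).trans ?_
  have hfun : (fun t => (compClip Φ₁ Φ₂ hI a β).hidden (Φ₁.L + Φ₂.L + 1) x
        (Fin.cast (by rw [heq]) t))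
      = (compClip Φ₁ Φ₂ hI a β).hidden (Φ₁.L + 1 + Φ₂.L) x := by
    funext t
    exact hidden_congr (compClip Φ₁ Φ₂ hI a β) heq x (Fin.cast (by rw [heq]) t)
  rw [hfun]
  exact cc_affine_right Φ₁ Φ₂ hI a β hab x Φ₂.L (Fin.cast (ccℓ_last Φ₁ Φ₂) i)

/-- identity network -/
def idDNN (m : ℕ) : DNN := ⟨0, fun _ => m, fun _ => 1, fun _ => 0⟩

lemma idDNN_params (m : ℕ) : (idDNN m).params = m * (m + 1) := by
  simp [DNN.params, idDNN]

lemma idDNN_realizes (m : ℕ) : (idDNN m).Realizes (id : (Fin m → ℝ) → Fin m → ℝ) := by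
  refine ⟨rfl, rfl, fun x i => ?_⟩
  show x i = (∑ j, (1 : Matrix (Fin m) (Fin m) ℝ) (Fin.cast rfl i) j
    * x (Fin.cast rfl j)) + 0
  simp [Matrix.one_apply]

lemma exists_compClip {m n q : ℕ} (Φ₁ Φ₂ : DNN)
    (g₁ : (Fin m → ℝ) → Fin n → ℝ) (g₂ : (Fin n → ℝ) → Fin q → ℝ)
    (h₁ : Φ₁.Realizes g₁) (h₂ : Φ₂.Realizes g₂) (a β : ℝ) (hab : a ≤ β) :
    ∃ Ψ : DNN, Ψ.Realizes (fun x j => g₂ (fun t => clip a β (g₁ x t)) j)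
      ∧ Ψ.params ≤ 2 * Φ₁.params + 2 * Φ₂.params := by
  obtain ⟨hm₁, hn₁, hr₁⟩ := h₁
  obtain ⟨hm₂, hn₂, hr₂⟩ := h₂
  have hI : Φ₁.ℓ (Φ₁.L + 1) = Φ₂.ℓ 0 := by rw [hn₁, hm₂]
  have hm : (compClip Φ₁ Φ₂ hI a β).ℓ 0 = m := by
    show ccℓ Φ₁ Φ₂ 0 = m
    rw [ccℓ_le Φ₁ Φ₂ (Nat.zero_le _), hm₁]
  have hn : (compClip Φ₁ Φ₂ hI a β).ℓ ((compClip Φ₁ Φ₂ hI a β).L + 1) = q := by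
    show ccℓ Φ₁ Φ₂ (Φ₁.L + Φ₂.L + 1 + 1) = q
    rw [ccℓ_last, hn₂]
  refine ⟨compClip Φ₁ Φ₂ hI a β, ⟨hm, hn, fun x i => ?_⟩,
    compClip_params Φ₁ Φ₂ hI a β⟩
  rw [compClip_realize Φ₁ Φ₂ hI a β hab]
  show g₂ (fun t => clip a β (g₁ x t)) i = _
  rw [hr₂ (fun t => clip a β (g₁ x t)) i]
  congr 1
  funext t
  congr 1
  rw [hr₁ x (Fin.cast hm₂ t)]
  exact congrArg₂ Φ₁.realize (funext fun j' => congrArg x (Fin.ext rfl)) (Fin.ext rfl)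

end DNN

lemma lpNorm_zero (p : ℝ≥0∞) (hp : 1 ≤ p) {n : ℕ} : lpNorm p (0 : Fin n → ℝ) = 0 := by
  unfold lpNorm
  split
  · rcases isEmpty_or_nonempty (Fin n) with h | h
    · simp [Real.iSup_of_isEmpty]
    · simp [ciSup_const]
  · rename_i hne
    have hpt : 0 < p.toReal :=
      ENNReal.toReal_pos (by intro h0; rw [h0] at hp; exact absurd hp (by simp)) hne
    have h1 : ∀ i : Fin n, |(0 : Fin n → ℝ) i| ^ p.toReal = 0 := fun i => by
      simp [Real.zero_rpow hpt.ne']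
    rw [Finset.sum_congr rfl fun i _ => h1 i, Finset.sum_const, smul_zero, one_div,
      Real.zero_rpow (by positivity)]

lemma exists_good_dnn (p : ℝ≥0∞) {m n : ℕ} (D : Set (Fin m → ℝ))
    (f : (Fin m → ℝ) → Fin n → ℝ) (L ε B : ℝ) (hB : 0 ≤ B)
    (h : Cost p D f L ε ≤ ENNReal.ofReal B) :
    ∃ (Φ : DNN) (g : (Fin m → ℝ) → Fin n → ℝ), Φ.Realizes g ∧
      (Φ.params : ℝ) ≤ B + 1 ∧
      (∀ x ∈ D, lpNorm p (g x - f x) ≤ ε) ∧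
      (∀ x ∈ D, ∀ y ∈ D, lpNorm p (g x - g y) ≤ L * lpNorm p (x - y)) := by
  have hlt : Cost p D f L ε < ENNReal.ofReal B + 1 :=
    lt_of_le_of_lt h (ENNReal.lt_add_right ENNReal.ofReal_ne_top one_ne_zero)
  rw [Cost] at hlt
  obtain ⟨N, hN, hNlt⟩ := sInf_lt_iff.mp hlt
  obtain ⟨Φ, g, hreal, hNe, happx, hlip⟩ := hN
  refine ⟨Φ, g, hreal, ?_, happx, hlip⟩
  rw [hNe] at hNlt
  have h1 : (Φ.params : ℝ≥0∞) < ENNReal.ofReal (B + 1) := by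
    rw [ENNReal.ofReal_add hB zero_le_one]
    simpa using hNlt
  rw [show ((Φ.params : ℝ≥0∞)) = ENNReal.ofReal ((Φ.params : ℝ)) from
    (ENNReal.ofReal_natCast _).symm] at h1
  exact ((ENNReal.ofReal_lt_ofReal_iff_of_nonneg (Nat.cast_nonneg _)).mp h1).le

end Comp
set_option maxHeartbeats 2000000 in
/-- **Proposition 2.9**: abstract DNN approximation of compositions of a fixed number `k`
of functions, each approximable with Lipschitz constant `c d^c` at cost `≤ c d^c ε⁻ᶜ`. -/
theorem abstract_composition_approx_fixed_number
    (c k : ℕ) (hc : 0 < c) (hk : 0 < k) (p : ℝ≥0∞) (hp : 1 ≤ p)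
    (dims : ℕ → ℕ → ℕ) (a b : ℕ → ℕ → ℝ)
    (g : ∀ d i : ℕ, (Fin (dims d i) → ℝ) → (Fin (dims d (i + 1)) → ℝ))
    (hdims : ∀ d, 0 < d → ∀ i ≤ k, 1 ≤ dims d i ∧ dims d i ≤ d ^ c)
    (hab : ∀ d, 0 < d → ∀ i < k, a d i < b d i)
    (hcont : ∀ d, 0 < d → ∀ i < k,
      ContinuousOn (g d i) (cube (dims d i) (a d i) (b d i)))
    (hcost : ∀ d, 0 < d → ∀ i < k, ∀ ε : ℝ, 0 < ε → ε ≤ 1 →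
      Cost p (cube (dims d i) (a d i) (b d i)) (g d i) ((c : ℝ) * (d : ℝ) ^ c) ε ≤
        ENNReal.ofReal ((c : ℝ) * (d : ℝ) ^ c * ε ^ (-(c : ℤ))))
    (hmap : ∀ d, 0 < d → ∀ i, i + 1 < k → ∀ x ∈ cube (dims d i) (a d i) (b d i),
      g d i x ∈ cube (dims d (i + 1)) (a d (i + 1)) (b d (i + 1))) :
    ∃ K : ℕ, 0 < K ∧ ∀ d, 0 < d → ∀ ε : ℝ, 0 < ε → ε ≤ 1 →
      ∃ (Φ : DNN) (R : (Fin (dims d 0) → ℝ) → (Fin (dims d k) → ℝ)),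
        Φ.Realizes R ∧
        (Φ.params : ℝ) ≤ (K : ℝ) * (d : ℝ) ^ K * ε ^ (-(c : ℤ)) ∧
        ∀ x ∈ cube (dims d 0) (a d 0) (b d 0),
          lpNorm p (R x - compSeq (dims d) (g d) k x) ≤ ε := by
  classical
  refine ⟨4 ^ (k + 1) * c ^ (k * c + 1) * k ^ c + 3 * c + k * c * c, by positivity, ?_⟩
  intro d hd ε hε hε1
  have hd1 : (1 : ℝ) ≤ (d : ℝ) := by exact_mod_cast hd
  have hc1 : (1 : ℝ) ≤ (c : ℝ) := by exact_mod_cast hc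
  have hk1 : (1 : ℝ) ≤ (k : ℝ) := by exact_mod_cast hk
  have hdc1 : (1 : ℝ) ≤ (d : ℝ) ^ c := one_le_pow₀ hd1
  have hLr1 : (1 : ℝ) ≤ (c : ℝ) * (d : ℝ) ^ c := by nlinarith
  have hLrk1 : (1 : ℝ) ≤ ((c : ℝ) * (d : ℝ) ^ c) ^ k := one_le_pow₀ hLr1
  have hM1 : (1 : ℝ) ≤ (k : ℝ) * ((c : ℝ) * (d : ℝ) ^ c) ^ k := by nlinarith
  have hMpos : (0 : ℝ) < (k : ℝ) * ((c : ℝ) * (d : ℝ) ^ c) ^ k := by linarith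
  set δ : ℝ := ε / ((k : ℝ) * ((c : ℝ) * (d : ℝ) ^ c) ^ k) with hδdef
  have hδpos : 0 < δ := div_pos hε hMpos
  have hδ1 : δ ≤ 1 := by rw [hδdef, div_le_one hMpos]; linarith
  have hδinv1 : (1 : ℝ) ≤ δ ^ (-(c : ℤ)) := by
    rw [zpow_neg, zpow_natCast]
    exact (one_le_inv₀ (pow_pos hδpos c)).mpr (pow_le_one₀ hδpos.le hδ1)
  have hδinv0 : (0 : ℝ) ≤ δ ^ (-(c : ℤ)) := by linarith
  set B : ℝ := (c : ℝ) * (d : ℝ) ^ c * δ ^ (-(c : ℤ)) + 1 with hBdef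
  have hB1 : (1 : ℝ) ≤ B := by nlinarith
  have hBle : B ≤ 2 * ((c : ℝ) * (d : ℝ) ^ c * δ ^ (-(c : ℤ))) := by nlinarith
  have hex : ∀ i, i < k → ∃ (Φ : DNN) (R : (Fin (dims d i) → ℝ) → Fin (dims d (i + 1)) → ℝ),
      Φ.Realizes R ∧ (Φ.params : ℝ) ≤ B ∧
      (∀ x ∈ cube (dims d i) (a d i) (b d i), lpNorm p (R x - g d i x) ≤ δ) ∧
      (∀ x ∈ cube (dims d i) (a d i) (b d i), ∀ y ∈ cube (dims d i) (a d i) (b d i),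
        lpNorm p (R x - R y) ≤ ((c : ℝ) * (d : ℝ) ^ c) * lpNorm p (x - y)) := by
    intro i hi
    obtain ⟨Φ, R, h1, h2, h3, h4⟩ := exists_good_dnn p _ (g d i) _ δ _
      (by positivity) (hcost d hd i hi δ hδpos hδ1)
    exact ⟨Φ, R, h1, by rw [hBdef]; exact h2, h3, h4⟩
  choose ΦF RF hreal hparams happx hlip using hex
  have hmem : ∀ x ∈ cube (dims d 0) (a d 0) (b d 0), ∀ j, j < k →
      compSeq (dims d) (g d) j x ∈ cube (dims d j) (a d j) (b d j) := by
    intro x hx j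
    induction j with
    | zero => intro _; exact hx
    | succ j ih => intro hj; exact hmap d hd j hj _ (ih (by omega))
  have main : ∀ j, j ≤ k → ∃ (G : (Fin (dims d 0) → ℝ) → Fin (dims d j) → ℝ) (Ψ : DNN),
      Ψ.Realizes G ∧ (Ψ.params : ℝ) ≤ 4 ^ j * (2 * (d : ℝ) ^ (2 * c) * B) ∧
      ∀ x ∈ cube (dims d 0) (a d 0) (b d 0),
        lpNorm p (G x - compSeq (dims d) (g d) j x)
          ≤ (j : ℝ) * ((c : ℝ) * (d : ℝ) ^ c) ^ j * δ := by
    intro j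
    induction j with
    | zero =>
      intro _
      refine ⟨id, DNN.idDNN (dims d 0), DNN.idDNN_realizes _, ?_, ?_⟩
      · rw [DNN.idDNN_params]
        have h0 := hdims d hd 0 (by omega)
        have hdim : (dims d 0 : ℝ) ≤ (d : ℝ) ^ c := by exact_mod_cast h0.2
        have hdimpos : (0 : ℝ) ≤ (dims d 0 : ℝ) := by positivity
        have h2c : ((d : ℝ)) ^ (2 * c) = (d : ℝ) ^ c * (d : ℝ) ^ c := by
          rw [two_mul, pow_add]
        push_cast
        rw [pow_zero, one_mul, h2c]
        nlinarith
      · intro x hx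
        have hzero : (id x - compSeq (dims d) (g d) 0 x : Fin (dims d 0) → ℝ) = 0 :=
          sub_self x
        rw [hzero, lpNorm_zero p hp]
        simp
    | succ j ih =>
      intro hj1
      have hjk : j < k := hj1
      obtain ⟨G, Ψ, hGreal, hGpar, hGerr⟩ := ih (by omega)
      obtain ⟨Ψ', hΨ'real, hΨ'par⟩ := DNN.exists_compClip Ψ (ΦF j hjk) G (RF j hjk)
        hGreal (hreal j hjk) (a d j) (b d j) (hab d hd j hjk).le
      refine ⟨_, Ψ', hΨ'real, ?_, ?_⟩
      · have h2 := hparams j hjk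
        have hcast : (Ψ'.params : ℝ) ≤ 2 * (Ψ.params : ℝ) + 2 * ((ΦF j hjk).params : ℝ) := by
          exact_mod_cast hΨ'par
        have hd2c1 : (1 : ℝ) ≤ (d : ℝ) ^ (2 * c) := one_le_pow₀ hd1
        have h4j : (1 : ℝ) ≤ (4 : ℝ) ^ j := one_le_pow₀ (by norm_num)
        have hB0 : (0 : ℝ) ≤ B := by linarith
        have hq1 : B ≤ 2 * (d : ℝ) ^ (2 * c) * B := by
          nlinarith [mul_nonneg (by linarith : (0 : ℝ) ≤ 2 * (d : ℝ) ^ (2 * c) - 1) hB0]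
        have hX0 : (0 : ℝ) ≤ 2 * (d : ℝ) ^ (2 * c) * B :=
          mul_nonneg (by positivity) hB0
        have hq2 : 2 * (d : ℝ) ^ (2 * c) * B ≤ (4 : ℝ) ^ j * (2 * (d : ℝ) ^ (2 * c) * B) := by
          nlinarith [mul_nonneg (by linarith : (0 : ℝ) ≤ (4 : ℝ) ^ j - 1) hX0]
        have key : 2 * ((4 : ℝ) ^ j * (2 * (d : ℝ) ^ (2 * c) * B)) + 2 * B
            ≤ (4 : ℝ) ^ (j + 1) * (2 * (d : ℝ) ^ (2 * c) * B) := by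
          rw [pow_succ]
          linarith
        linarith
      · intro x hx
        have hz := hmem x hx j hjk
        have hGx := hGerr x hx
        have habj : a d j ≤ b d j := (hab d hd j hjk).le
        have hcv_mem : (fun t => clip (a d j) (b d j) (G x t))
            ∈ cube (dims d j) (a d j) (b d j) :=
          ⟨fun t => (clip_mem habj _).1, fun t => (clip_mem habj _).2⟩
        have hsplit : (fun t => RF j hjk (fun t' => clip (a d j) (b d j) (G x t')) t)
              - compSeq (dims d) (g d) (j + 1) x
            = (RF j hjk (fun t' => clip (a d j) (b d j) (G x t'))
                - RF j hjk (compSeq (dims d) (g d) j x))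
              + (RF j hjk (compSeq (dims d) (g d) j x)
                - g d j (compSeq (dims d) (g d) j x)) := by
          rw [sub_add_sub_cancel]
          rfl
        have hclipdist : lpNorm p ((fun t' => clip (a d j) (b d j) (G x t'))
              - compSeq (dims d) (g d) j x)
            ≤ lpNorm p (G x - compSeq (dims d) (g d) j x) := by
          apply lpNorm_mono
          intro t
          have hzt : clip (a d j) (b d j) (compSeq (dims d) (g d) j x t)
              = compSeq (dims d) (g d) j x t := clip_eq_self (hz.1 t) (hz.2 t)
          show |clip (a d j) (b d j) (G x t) - compSeq (dims d) (g d) j x t| ≤ _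
          calc |clip (a d j) (b d j) (G x t) - compSeq (dims d) (g d) j x t|
              = |clip (a d j) (b d j) (G x t)
                - clip (a d j) (b d j) (compSeq (dims d) (g d) j x t)| := by rw [hzt]
            _ ≤ |G x t - compSeq (dims d) (g d) j x t| := clip_lipschitz _ _ _ _
        have hpow1 : (1 : ℝ) ≤ ((c : ℝ) * (d : ℝ) ^ c) ^ (j + 1) := one_le_pow₀ hLr1
        have hpowj : (0 : ℝ) ≤ ((c : ℝ) * (d : ℝ) ^ c) ^ j := by positivity
        calc lpNorm p ((fun t => RF j hjk (fun t' => clip (a d j) (b d j) (G x t')) t)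
              - compSeq (dims d) (g d) (j + 1) x)
            ≤ lpNorm p (RF j hjk (fun t' => clip (a d j) (b d j) (G x t'))
                  - RF j hjk (compSeq (dims d) (g d) j x))
              + lpNorm p (RF j hjk (compSeq (dims d) (g d) j x)
                  - g d j (compSeq (dims d) (g d) j x)) := by
              rw [hsplit]; exact lpNorm_add_le p hp _ _
          _ ≤ ((c : ℝ) * (d : ℝ) ^ c)
                * lpNorm p ((fun t' => clip (a d j) (b d j) (G x t'))
                  - compSeq (dims d) (g d) j x)
              + δ := add_le_add (hlip j hjk _ hcv_mem _ hz) (happx j hjk _ hz)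
          _ ≤ ((c : ℝ) * (d : ℝ) ^ c) * ((j : ℝ) * ((c : ℝ) * (d : ℝ) ^ c) ^ j * δ) + δ := by
              have h := hclipdist.trans hGx
              have hLr0 : (0 : ℝ) ≤ (c : ℝ) * (d : ℝ) ^ c := by linarith
              exact add_le_add (mul_le_mul_of_nonneg_left h hLr0) le_rfl
          _ ≤ ((j : ℝ) + 1) * ((c : ℝ) * (d : ℝ) ^ c) ^ (j + 1) * δ := by
              have e : ((c : ℝ) * (d : ℝ) ^ c) * ((j : ℝ) * ((c : ℝ) * (d : ℝ) ^ c) ^ j * δ)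
                  = (j : ℝ) * ((c : ℝ) * (d : ℝ) ^ c) ^ (j + 1) * δ := by ring
              have e2 : ((j : ℝ) + 1) * ((c : ℝ) * (d : ℝ) ^ c) ^ (j + 1) * δ
                  = (j : ℝ) * ((c : ℝ) * (d : ℝ) ^ c) ^ (j + 1) * δ
                    + ((c : ℝ) * (d : ℝ) ^ c) ^ (j + 1) * δ := by ring
              have e3 : δ ≤ ((c : ℝ) * (d : ℝ) ^ c) ^ (j + 1) * δ := by
                nlinarith [mul_nonneg (sub_nonneg.mpr hpow1) hδpos.le]
              rw [e, e2]
              linarith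
          _ = (((j : ℕ) + 1 : ℕ) : ℝ) * ((c : ℝ) * (d : ℝ) ^ c) ^ (j + 1) * δ := by
              push_cast; ring
  obtain ⟨G, Ψ, hreal', hpar, herr⟩ := main k le_rfl
  refine ⟨Ψ, G, hreal', ?_, ?_⟩
  · have hδpow : δ ^ (-(c : ℤ))
        = ((k : ℝ) * ((c : ℝ) * (d : ℝ) ^ c) ^ k) ^ c * ε ^ (-(c : ℤ)) := by
      rw [hδdef, div_zpow, div_eq_mul_inv, ← zpow_neg, neg_neg, zpow_natCast, mul_comm]
    have hεinv0 : (0 : ℝ) ≤ ε ^ (-(c : ℤ)) := by positivity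
    have hcoef : ((4 : ℝ) ^ (k + 1) * (c : ℝ) ^ (k * c + 1) * (k : ℝ) ^ c)
        ≤ ((4 ^ (k + 1) * c ^ (k * c + 1) * k ^ c + 3 * c + k * c * c : ℕ) : ℝ) := by
      push_cast
      nlinarith [sq_nonneg ((c : ℝ)), hc1, hk1]
    have hdpow : ((d : ℝ)) ^ (3 * c + k * c * c)
        ≤ (d : ℝ) ^ (4 ^ (k + 1) * c ^ (k * c + 1) * k ^ c + 3 * c + k * c * c) :=
      pow_le_pow_right₀ hd1 (by omega)
    calc (Ψ.params : ℝ) ≤ 4 ^ k * (2 * (d : ℝ) ^ (2 * c) * B) := hpar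
      _ ≤ 4 ^ k * (2 * (d : ℝ) ^ (2 * c)
          * (2 * ((c : ℝ) * (d : ℝ) ^ c * δ ^ (-(c : ℤ))))) := by
          have h2c0 : (0 : ℝ) ≤ (d : ℝ) ^ (2 * c) := by positivity
          have h4k : (0 : ℝ) ≤ (4 : ℝ) ^ k := by positivity
          nlinarith
      _ = ((4 : ℝ) ^ (k + 1) * (c : ℝ) ^ (k * c + 1) * (k : ℝ) ^ c)
          * ((d : ℝ) ^ (3 * c + k * c * c)) * ε ^ (-(c : ℤ)) := by
          rw [hδpow, mul_pow, ← pow_mul, mul_pow, ← pow_mul]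
          ring
      _ ≤ ((4 ^ (k + 1) * c ^ (k * c + 1) * k ^ c + 3 * c + k * c * c : ℕ) : ℝ)
          * (d : ℝ) ^ (4 ^ (k + 1) * c ^ (k * c + 1) * k ^ c + 3 * c + k * c * c)
          * ε ^ (-(c : ℤ)) := by
          have hA : (0 : ℝ) ≤ (4 : ℝ) ^ (k + 1) * (c : ℝ) ^ (k * c + 1) * (k : ℝ) ^ c := by
            positivity
          have hD : (0 : ℝ) ≤ ((d : ℝ)) ^ (3 * c + k * c * c) := by positivity
          gcongr
  · intro x hx
    have h1 := herr x hx
    have h2 : (k : ℝ) * ((c : ℝ) * (d : ℝ) ^ c) ^ k * δ = ε := by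
      rw [hδdef]
      field_simp
    linarith

end
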